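/- Every finitely generated linear group is residually finite: if G is a finitely generated subgroup of GL_n(k) for a field k, then for every nonidentity element g of G there exists a finite group Q and a homomorphism φ : G → Q with φ(g) ≠ 1 (Mal'cev's theorem). -/

import Mathlib

/-- `ℤ` is a Jacobson ring. -/
lemma malcev_int_isJacobson : IsJacobsonRing ℤ := by
  rw [isJacobsonRing_iff_prime_eq]
  intro P hP
  by_cases hbot : P = ⊥
  · subst hbot
    refine le_antisymm ?_ Ideal.le_jacobson
    intro x hx
    rw [Ideal.mem_jacobson_bot] at hx
    have h1 := hx 1
    have h2 := hx (-1)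
    rw [Int.isUnit_iff] at h1 h2
    rw [Ideal.mem_bot]
    omega
  · have hmax := IsPrime.to_maximal_ideal (hpi := hP) hbot
    exact le_antisymm (sInf_le ⟨le_rfl, hmax⟩) Ideal.le_jacobson

/-- A field which is module-finite over `ℤ` is finite. -/
lemma malcev_finite_of_moduleFinite (F : Type*) [Field F] [Module.Finite ℤ F] :
    Finite F := by
  have hint : Algebra.IsIntegral ℤ F := Algebra.IsIntegral.of_finite ℤ F
  by_cases hinj : Function.Injective (algebraMap ℤ F)
  · exact absurd (isField_of_isIntegral_of_isField hinj (Field.toIsField F)) Int.not_isField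
  · rw [injective_iff_map_eq_zero] at hinj
    push_neg at hinj
    obtain ⟨m, hm, hm0⟩ := hinj
    refine Module.finite_of_fg_torsion F fun x => ?_
    refine ⟨⟨m, mem_nonZeroDivisors_of_ne_zero hm0⟩, ?_⟩
    have : (m : F) = 0 := by simpa using hm
    simp [Submonoid.smul_def, zsmul_eq_mul, this]

set_option maxHeartbeats 1000000 in
set_option synthInstance.maxHeartbeats 200000 in
/-- Mal'cev: Every finitely generated linear group is residually finite:
if `G` is a finitely generated subgroup of `GL_n(k)` for a field `k`, then for every
nonidentity `g` in `G` there is a finite group `Q` and a homomorphism `φ : G → Q`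
with `φ g ≠ 1`. -/
theorem stmt8 (k : Type*) [Field k] (n : ℕ) (G : Subgroup (GL (Fin n) k))
    (hfg : Group.FG G) (g : G) (hg : g ≠ 1) :
    ∃ (Q : Type) (_ : Group Q), Finite Q ∧ ∃ φ : G →* Q, φ g ≠ 1 := by
  classical
  haveI : IsJacobsonRing ℤ := malcev_int_isJacobson
  obtain ⟨S, hSG⟩ := hfg.out
  -- the finitely many matrix entries generating our ring
  set T : Finset (GL (Fin n) k) :=
    S.image (⇑G.subtype) ∪ S.image (fun s => (G.subtype s)⁻¹) with hT
  set E : Finset k := T.biUnion (fun t =>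
    Finset.image (fun p : Fin n × Fin n =>
      (t : Matrix (Fin n) (Fin n) k) p.1 p.2) Finset.univ) with hE
  set A : Subalgebra ℤ k := Algebra.adjoin ℤ (E : Set k) with hAdef
  haveI hA : Algebra.FiniteType ℤ A :=
    (Subalgebra.fg_iff_finiteType A).mp (Subalgebra.fg_adjoin_finset E)
  haveI : IsJacobsonRing A := isJacobsonRing_of_finiteType (A := ℤ) (B := A)
  haveI : IsDomain A := Subalgebra.isDomain A
  -- the subgroup of GL with entries (of the matrix and its inverse) in A
  let H : Subgroup (GL (Fin n) k) :=
  { carrier := {x | (∀ i j, (x : Matrix (Fin n) (Fin n) k) i j ∈ A) ∧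
      (∀ i j, ((x⁻¹ : GL (Fin n) k) : Matrix (Fin n) (Fin n) k) i j ∈ A)}
    one_mem' := by
      have h : ∀ i j : Fin n, ((1 : GL (Fin n) k) : Matrix (Fin n) (Fin n) k) i j ∈ A := by
        intro i j
        rw [Units.val_one, Matrix.one_apply]
        split
        · exact one_mem A
        · exact zero_mem A
      exact ⟨h, by simpa using h⟩
    mul_mem' := by
      rintro x y ⟨hx1, hx2⟩ ⟨hy1, hy2⟩
      constructor
      · intro i j
        rw [Units.val_mul, Matrix.mul_apply]
        exact Subalgebra.sum_mem A fun l _ => mul_mem (hx1 i l) (hy1 l j)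
      · intro i j
        rw [mul_inv_rev, Units.val_mul, Matrix.mul_apply]
        exact Subalgebra.sum_mem A fun l _ => mul_mem (hy2 i l) (hx2 l j)
    inv_mem' := by
      rintro x ⟨hx1, hx2⟩
      refine ⟨hx2, ?_⟩
      rw [inv_inv]
      exact hx1 }
  -- every element of G lies in H
  have hGH : ∀ x : G, (x : GL (Fin n) k) ∈ H := by
    have hle : Subgroup.closure (G.subtype '' (S : Set G)) ≤ H := by
      rw [Subgroup.closure_le]
      rintro _ ⟨s, hs, rfl⟩
      have hmem : ∀ t ∈ T, ∀ i j, (t : Matrix (Fin n) (Fin n) k) i j ∈ A := by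
        intro t ht i j
        refine Algebra.subset_adjoin ?_
        simp only [hE, Finset.coe_biUnion, Set.mem_iUnion, Finset.mem_coe]
        exact ⟨t, ht, Finset.mem_image.mpr ⟨(i, j), Finset.mem_univ _, rfl⟩⟩
      have h1 : (s : GL (Fin n) k) ∈ T := by
        simp only [hT, Finset.mem_union, Finset.mem_image]
        exact Or.inl ⟨s, hs, rfl⟩
      have h2 : ((s : GL (Fin n) k))⁻¹ ∈ T := by
        simp only [hT, Finset.mem_union, Finset.mem_image]
        exact Or.inr ⟨s, hs, rfl⟩
      exact ⟨hmem _ h1, hmem _ h2⟩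
    intro x
    have hx : (x : GL (Fin n) k) ∈ Subgroup.map G.subtype ⊤ :=
      ⟨x, trivial, rfl⟩
    rw [← hSG, MonoidHom.map_closure] at hx
    exact hle hx
  -- the matrix over A associated to an element of G
  let matA : G → Matrix (Fin n) (Fin n) A := fun x => fun i j =>
    ⟨((x : GL (Fin n) k) : Matrix (Fin n) (Fin n) k) i j, (hGH x).1 i j⟩
  let ι : Matrix (Fin n) (Fin n) A →+* Matrix (Fin n) (Fin n) k :=
    (A.val.toRingHom).mapMatrix
  have hι : Function.Injective ι := fun M N h => by
    ext i j
    exact congrArg (fun M : Matrix (Fin n) (Fin n) k => M i j) h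
  have hcomm : ∀ x : G, ι (matA x) = ((x : GL (Fin n) k) : Matrix (Fin n) (Fin n) k) := by
    intro x; ext i j; rfl
  have hmul : ∀ x y : G, matA (x * y) = matA x * matA y := by
    intro x y
    apply hι
    rw [map_mul, hcomm, hcomm, hcomm]
    push_cast
    rfl
  have hone : matA 1 = 1 := by
    apply hι
    rw [map_one, hcomm]
    push_cast
    rfl
  let φ₀ : G →* (Matrix (Fin n) (Fin n) A)ˣ :=
  { toFun := fun x => ⟨matA x, matA x⁻¹,
      by rw [← hmul, mul_inv_cancel, hone],
      by rw [← hmul, inv_mul_cancel, hone]⟩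
    map_one' := Units.ext hone
    map_mul' := fun x y => Units.ext (hmul x y) }
  -- the nonzero element of A witnessing g ≠ 1
  have hgk : ((g : GL (Fin n) k) : Matrix (Fin n) (Fin n) k) ≠ 1 := by
    intro h
    exact hg (Subtype.ext (Units.ext h))
  obtain ⟨i, j, hij⟩ : ∃ i j,
      ((g : GL (Fin n) k) : Matrix (Fin n) (Fin n) k) i j ≠
        (1 : Matrix (Fin n) (Fin n) k) i j := by
    by_contra h
    push_neg at h
    exact hgk (by ext i j; exact h i j)
  set a : A := matA g i j - (1 : Matrix (Fin n) (Fin n) A) i j with ha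
  have hOne : ((1 : Matrix (Fin n) (Fin n) A) i j : k) = (1 : Matrix (Fin n) (Fin n) k) i j := by
    simp only [Matrix.one_apply]
    split <;> simp
  have ha0 : a ≠ 0 := by
    intro h
    apply hij
    have := congrArg (Subtype.val) h
    simp only [ha, AddSubgroupClass.coe_sub, ZeroMemClass.coe_zero, sub_eq_zero] at this
    rw [← hOne]
    exact this
  -- find a maximal ideal avoiding a
  have hjac : Ideal.jacobson (⊥ : Ideal A) = ⊥ :=
    ‹IsJacobsonRing A›.out Ideal.isRadical_bot_of_noZeroDivisors
  have ha' : a ∉ Ideal.jacobson (⊥ : Ideal A) := by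
    rw [hjac]; simpa using ha0
  rw [Ideal.jacobson, Ideal.mem_sInf] at ha'
  push_neg at ha'
  obtain ⟨m, hmem, ham⟩ := ha'
  haveI hmax : m.IsMaximal := hmem.2
  letI : Field (A ⧸ m) := Ideal.Quotient.field m
  haveI : Algebra.FiniteType ℤ (A ⧸ m) :=
    Algebra.FiniteType.of_surjective (Ideal.Quotient.mkₐ ℤ m) (Ideal.Quotient.mkₐ_surjective ℤ m)
  haveI : Module.Finite ℤ (A ⧸ m) := finite_of_finite_type_of_isJacobsonRing ℤ (A ⧸ m)
  haveI hFfin : Finite (A ⧸ m) := malcev_finite_of_moduleFinite (A ⧸ m)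
  haveI : Finite ((Matrix (Fin n) (Fin n) (A ⧸ m))ˣ) := by
    have : Finite (Matrix (Fin n) (Fin n) (A ⧸ m)) := by
      unfold Matrix; infer_instance
    infer_instance
  let ψ : G →* (Matrix (Fin n) (Fin n) (A ⧸ m))ˣ :=
    (Units.map ((Ideal.Quotient.mk m).mapMatrix.toMonoidHom)).comp φ₀
  have hψg : ψ g ≠ 1 := by
    intro h
    apply ham
    have hval : (Ideal.Quotient.mk m).mapMatrix (matA g) = 1 := congrArg Units.val h
    have hij' : Ideal.Quotient.mk m (matA g i j) =
        Ideal.Quotient.mk m ((1 : Matrix (Fin n) (Fin n) A) i j) := by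
      have h2 := congrArg (fun M : Matrix (Fin n) (Fin n) (A ⧸ m) => M i j) hval
      simp only [RingHom.mapMatrix_apply, Matrix.map_apply] at h2
      rw [h2]
      simp [Matrix.one_apply, apply_ite (Ideal.Quotient.mk m)]
    have h3 : Ideal.Quotient.mk m a = 0 := by
      rw [ha, RingHom.map_sub, sub_eq_zero]
      exact hij'
    exact (Ideal.Quotient.eq_zero_iff_mem).mp h3
  -- shrink to a Type 0 group
  haveI : Small.{0} ((Matrix (Fin n) (Fin n) (A ⧸ m))ˣ) := inferInstance
  refine ⟨Shrink ((Matrix (Fin n) (Fin n) (A ⧸ m))ˣ), inferInstance,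
    Finite.of_equiv _ (equivShrink _), ?_⟩
  refine ⟨((Shrink.mulEquiv).symm.toMonoidHom).comp ψ, ?_⟩
  intro h
  apply hψg
  have := congrArg (Shrink.mulEquiv (α := (Matrix (Fin n) (Fin n) (A ⧸ m))ˣ)) h
  simpa using this
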